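/- arXiv:1809.08518 — 7 statements merged into one kernel-verified Lean document; each statement's English description precedes it below -/
import Mathlib

section
/- If g : [0,∞) → [0,∞) is C¹ on (0,∞) with g(0)=0 and satisfies δ₀ ≤ t·g'(t)/g(t) ≤ g₀ for all t > 0 (with 0 < δ₀ ≤ g₀), then for all s, t ≥ 0 one has min{s^{δ₀}, s^{g₀}}·g(t) ≤ g(s·t) ≤ max{s^{δ₀}, s^{g₀}}·g(t). -/
private lemma aux_deriv (g : ℝ → ℝ) (p : ℝ)
    (hC1 : ContDiffOn ℝ 1 g (Set.Ioi 0)) (u : ℝ) (hu : 0 < u) :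
    HasDerivAt (fun x => g x / x ^ p)
      ((deriv g u * u ^ p - g u * (p * u ^ (p - 1))) / (u ^ p) ^ 2) u := by
  have hdg : DifferentiableAt ℝ g u :=
    ((hC1.differentiableOn one_ne_zero).differentiableAt (Ioi_mem_nhds hu))
  have hd : HasDerivAt g (deriv g u) u := hdg.hasDerivAt
  have hr : HasDerivAt (fun x : ℝ => x ^ p) (p * u ^ (p - 1)) u :=
    Real.hasDerivAt_rpow_const (Or.inl hu.ne')
  exact hd.div hr (Real.rpow_pos_of_pos hu p).ne'

private lemma conv1 (x y s t p : ℝ) (hs : 0 < s) (ht : 0 < t)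
    (h : x / t ^ p ≤ y / (s * t) ^ p) : s ^ p * x ≤ y := by
  rw [div_le_div_iff₀ (Real.rpow_pos_of_pos ht p)
    (Real.rpow_pos_of_pos (mul_pos hs ht) p), Real.mul_rpow hs.le ht.le] at h
  have htp : 0 < t ^ p := Real.rpow_pos_of_pos ht p
  nlinarith [h, htp]

private lemma conv2 (x y s t p : ℝ) (hs : 0 < s) (ht : 0 < t)
    (h : y / (s * t) ^ p ≤ x / t ^ p) : y ≤ s ^ p * x := by
  rw [div_le_div_iff₀ (Real.rpow_pos_of_pos (mul_pos hs ht) p)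
    (Real.rpow_pos_of_pos ht p), Real.mul_rpow hs.le ht.le] at h
  have htp : 0 < t ^ p := Real.rpow_pos_of_pos ht p
  nlinarith [h, htp]

theorem stmt_0 (g : ℝ → ℝ) (δ₀ g₀ : ℝ)
    (hδ : 0 < δ₀) (hδg : δ₀ ≤ g₀)
    (hcont : ContinuousOn g (Set.Ici 0))
    (hC1 : ContDiffOn ℝ 1 g (Set.Ioi 0))
    (hg0 : g 0 = 0)
    (hpos : ∀ t : ℝ, 0 < t → 0 < g t)
    (hlieb : ∀ t : ℝ, 0 < t → δ₀ ≤ t * deriv g t / g t ∧ t * deriv g t / g t ≤ g₀) :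
    ∀ s t : ℝ, 0 ≤ s → 0 ≤ t →
      min (s ^ δ₀) (s ^ g₀) * g t ≤ g (s * t) ∧
      g (s * t) ≤ max (s ^ δ₀) (s ^ g₀) * g t := by
  have hlow : ∀ u : ℝ, 0 < u → δ₀ * g u ≤ u * deriv g u := fun u hu =>
    (le_div_iff₀ (hpos u hu)).mp (hlieb u hu).1
  have hhigh : ∀ u : ℝ, 0 < u → u * deriv g u ≤ g₀ * g u := fun u hu =>
    (div_le_iff₀ (hpos u hu)).mp (hlieb u hu).2
  have hdiff : DifferentiableOn ℝ g (Set.Ioi 0) := hC1.differentiableOn one_ne_zero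
  -- monotonicity of g u / u ^ δ₀
  have hmono : MonotoneOn (fun u => g u / u ^ δ₀) (Set.Ioi 0) := by
    apply monotoneOn_of_deriv_nonneg (convex_Ioi 0)
    · exact ContinuousOn.div (hdiff.continuousOn)
        (fun x hx => (Real.continuousAt_rpow_const x δ₀ (Or.inl (ne_of_gt hx))).continuousWithinAt)
        (fun x hx => (Real.rpow_pos_of_pos hx δ₀).ne')
    · rw [interior_Ioi]
      intro u hu
      exact (aux_deriv g δ₀ hC1 u hu).differentiableAt.differentiableWithinAt
    · rw [interior_Ioi]
      intro u hu
      have hu' : (0:ℝ) < u := hu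
      rw [(aux_deriv g δ₀ hC1 u hu').deriv]
      apply div_nonneg _ (sq_nonneg _)
      have e1 : u ^ δ₀ = u * u ^ (δ₀ - 1) := by
        have := Real.rpow_add hu' 1 (δ₀ - 1)
        rw [show (1:ℝ) + (δ₀ - 1) = δ₀ by ring, Real.rpow_one] at this
        exact this
      have h2 : 0 < u ^ (δ₀ - 1) := Real.rpow_pos_of_pos hu' _
      have h3 := hlow u hu'
      rw [e1]
      nlinarith [mul_le_mul_of_nonneg_right h3 h2.le]
  -- antitonicity of g u / u ^ g₀
  have hanti : AntitoneOn (fun u => g u / u ^ g₀) (Set.Ioi 0) := by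
    apply antitoneOn_of_deriv_nonpos (convex_Ioi 0)
    · exact ContinuousOn.div (hdiff.continuousOn)
        (fun x hx => (Real.continuousAt_rpow_const x g₀ (Or.inl (ne_of_gt hx))).continuousWithinAt)
        (fun x hx => (Real.rpow_pos_of_pos hx g₀).ne')
    · rw [interior_Ioi]
      intro u hu
      exact (aux_deriv g g₀ hC1 u hu).differentiableAt.differentiableWithinAt
    · rw [interior_Ioi]
      intro u hu
      have hu' : (0:ℝ) < u := hu
      rw [(aux_deriv g g₀ hC1 u hu').deriv]
      apply div_nonpos_of_nonpos_of_nonneg _ (sq_nonneg _)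
      have e1 : u ^ g₀ = u * u ^ (g₀ - 1) := by
        have := Real.rpow_add hu' 1 (g₀ - 1)
        rw [show (1:ℝ) + (g₀ - 1) = g₀ by ring, Real.rpow_one] at this
        exact this
      have h2 : 0 < u ^ (g₀ - 1) := Real.rpow_pos_of_pos hu' _
      have h3 := hhigh u hu'
      rw [e1]
      nlinarith [mul_le_mul_of_nonneg_right h3 h2.le]
  intro s t hs ht
  rcases ht.eq_or_lt with rfl | ht
  · simp [hg0]
  rcases hs.eq_or_lt with rfl | hs
  · have hg0' : g₀ ≠ 0 := (hδ.trans_le hδg).ne'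
    simp [hg0, Real.zero_rpow hδ.ne', Real.zero_rpow hg0']
  have hst : (0 : ℝ) < s * t := mul_pos hs ht
  rcases le_total 1 s with hs1 | hs1
  · have hle : t ≤ s * t := le_mul_of_one_le_left ht.le hs1
    have h1 : s ^ δ₀ * g t ≤ g (s * t) :=
      conv1 _ _ _ _ _ hs ht (hmono ht hst hle)
    have h2 : g (s * t) ≤ s ^ g₀ * g t :=
      conv2 _ _ _ _ _ hs ht (hanti ht hst hle)
    have hmm : s ^ δ₀ ≤ s ^ g₀ := Real.rpow_le_rpow_of_exponent_le hs1 hδg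
    rw [min_eq_left hmm, max_eq_right hmm]
    exact ⟨h1, h2⟩
  · have hle : s * t ≤ t := mul_le_of_le_one_left ht.le hs1
    have h1 : g (s * t) ≤ s ^ δ₀ * g t :=
      conv2 _ _ _ _ _ hs ht (hmono hst ht hle)
    have h2 : s ^ g₀ * g t ≤ g (s * t) :=
      conv1 _ _ _ _ _ hs ht (hanti hst ht hle)
    have hmm : s ^ g₀ ≤ s ^ δ₀ := Real.rpow_le_rpow_of_exponent_ge hs hs1 hδg
    rw [min_eq_right hmm, max_eq_left hmm]
    exact ⟨h2, h1⟩
end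

section
/- Under the Lieberman condition on g, the function G(t) = ∫₀ᵗ g(s) ds satisfies G(a+b) ≤ 2^{g₀}·(1+g₀)·(G(a) + G(b)) for all a, b ≥ 0. -/
theorem stmt_3 (g G : ℝ → ℝ) (δ₀ g₀ : ℝ)
    (hδ : 0 < δ₀) (hδg : δ₀ ≤ g₀)
    (hcont : ContinuousOn g (Set.Ici 0))
    (hC1 : ContDiffOn ℝ 1 g (Set.Ioi 0))
    (hg0 : g 0 = 0)
    (hpos : ∀ t : ℝ, 0 < t → 0 < g t)
    (hlieb : ∀ t : ℝ, 0 < t → δ₀ ≤ t * deriv g t / g t ∧ t * deriv g t / g t ≤ g₀)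
    (hG : ∀ t : ℝ, G t = ∫ s in (0:ℝ)..t, g s) :
    ∀ a b : ℝ, 0 ≤ a → 0 ≤ b →
      G (a + b) ≤ (2:ℝ) ^ g₀ * (1 + g₀) * (G a + G b) := by
  have hGeq : G = fun t => ∫ s in (0:ℝ)..t, g s := funext hG
  subst hGeq
  have hg₀ : 0 < g₀ := lt_of_lt_of_le hδ hδg
  -- nonnegativity of g
  have hgnn : ∀ t : ℝ, 0 ≤ t → 0 ≤ g t := by
    intro t ht
    rcases ht.eq_or_lt with h | h
    · simp [← h, hg0]
    · exact (hpos t h).le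
  -- differentiability of g on Ioi 0
  have hdiff : ∀ t : ℝ, 0 < t → DifferentiableAt ℝ g t := by
    intro t ht
    exact (hC1.differentiableOn one_ne_zero t ht).differentiableAt (isOpen_Ioi.mem_nhds ht)
  -- derivative bounds
  have hderiv_nonneg : ∀ t : ℝ, 0 < t → 0 ≤ deriv g t := by
    intro t ht
    have h1 := (hlieb t ht).1
    have h2 : 0 < t * deriv g t / g t := lt_of_lt_of_le hδ h1
    by_contra h
    push_neg at h
    have h3 : t * deriv g t / g t < 0 :=
      div_neg_of_neg_of_pos (by nlinarith) (hpos t ht)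
    linarith
  have hderiv_le : ∀ t : ℝ, 0 < t → t * deriv g t ≤ g₀ * g t := by
    intro t ht
    exact (div_le_iff₀ (hpos t ht)).mp (hlieb t ht).2
  -- g monotone on Ici 0
  have hmono : MonotoneOn g (Set.Ici 0) := by
    refine monotoneOn_of_deriv_nonneg (convex_Ici 0) hcont ?_ ?_
    · rw [interior_Ici]
      exact fun t ht => (hdiff t ht).differentiableWithinAt
    · rw [interior_Ici]
      exact fun t ht => hderiv_nonneg t ht
  -- interval integrability
  have hint : ∀ x y : ℝ, 0 ≤ x → 0 ≤ y → IntervalIntegrable g MeasureTheory.volume x y := by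
    intro x y hx hy
    apply (hcont.mono ?_).intervalIntegrable
    intro s hs
    exact Set.mem_Ici.mpr (le_trans (le_inf hx hy) hs.1)
  -- continuity of G on Ici 0
  have hGcont : ContinuousOn (fun t => ∫ s in (0:ℝ)..t, g s) (Set.Ici 0) := by
    intro x hx
    have hx0 : (0:ℝ) ≤ x := hx
    have h1 : ContinuousOn (fun t => ∫ s in (0:ℝ)..t, g s) (Set.uIcc 0 (x + 1)) := by
      apply intervalIntegral.continuousOn_primitive_interval
      rw [Set.uIcc_of_le (show (0:ℝ) ≤ x + 1 by linarith)]
      exact (hcont.mono (fun s hs => Set.mem_Ici.mpr hs.1)).integrableOn_Icc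
    have hmem : Set.Icc (0:ℝ) (x + 1) ∈ nhdsWithin x (Set.Ici 0) := by
      rw [← Set.Ici_inter_Iic]
      exact Filter.inter_mem self_mem_nhdsWithin
        (mem_nhdsWithin_of_mem_nhds (Iic_mem_nhds (by linarith)))
    rw [Set.uIcc_of_le (show (0:ℝ) ≤ x + 1 by linarith)] at h1
    exact ContinuousWithinAt.mono_of_mem_nhdsWithin (h1 x ⟨hx0, by linarith⟩) hmem
  -- FTC: derivative of G
  have hGderiv : ∀ t : ℝ, 0 < t → HasDerivAt (fun u => ∫ s in (0:ℝ)..u, g s) (g t) t := by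
    intro t ht
    have hca : ContinuousAt g t :=
      (hcont t ht.le).continuousAt (Filter.mem_of_superset (isOpen_Ioi.mem_nhds ht)
        Set.Ioi_subset_Ici_self)
    exact intervalIntegral.integral_hasDerivAt_right (hint 0 t le_rfl ht.le)
      (ContinuousOn.stronglyMeasurableAtFilter isOpen_Ioi
        (hcont.mono (Set.Ioi_subset_Ici_self)) t ht) hca
  -- b * g b ≤ (1 + g₀) * G b
  have hbgb : ∀ b : ℝ, 0 ≤ b → b * g b ≤ (1 + g₀) * ∫ s in (0:ℝ)..b, g s := by
    intro b hb
    set F : ℝ → ℝ := fun t => (1 + g₀) * (∫ s in (0:ℝ)..t, g s) - t * g t with hF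
    have hFmono : MonotoneOn F (Set.Ici 0) := by
      refine monotoneOn_of_deriv_nonneg (convex_Ici 0) ?_ ?_ ?_
      · exact (hGcont.const_smul (1 + g₀)).sub (continuousOn_id.mul hcont)
      · rw [interior_Ici]
        intro t ht
        exact (((hGderiv t ht).const_mul (1 + g₀)).sub
          ((hasDerivAt_id t).mul (hdiff t ht).hasDerivAt)).differentiableAt.differentiableWithinAt
      · rw [interior_Ici]
        intro t ht
        have hD : HasDerivAt F ((1 + g₀) * g t - (1 * g t + t * deriv g t)) t :=
          ((hGderiv t ht).const_mul (1 + g₀)).sub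
            ((hasDerivAt_id t).mul (hdiff t ht).hasDerivAt)
        rw [hD.deriv]
        have := hderiv_le t ht
        nlinarith
    have h0 : F 0 = 0 := by simp [hF, hg0]
    have := hFmono (Set.self_mem_Ici) hb hb
    rw [h0] at this
    simp only [hF] at this
    linarith
  -- doubling: g (2*b) ≤ 2^g₀ * g b
  have hdouble : ∀ b : ℝ, 0 < b → g (2 * b) ≤ (2:ℝ) ^ g₀ * g b := by
    intro b hb
    set H : ℝ → ℝ := fun t => g₀ * Real.log t - Real.log (g t) with hH
    have hHmono : MonotoneOn H (Set.Icc b (2 * b)) := by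
      have hder : ∀ t : ℝ, 0 < t → HasDerivAt H (g₀ * t⁻¹ - (g t)⁻¹ * deriv g t) t := by
        intro t ht
        have h1 : HasDerivAt Real.log t⁻¹ t := Real.hasDerivAt_log ht.ne'
        have h2 : HasDerivAt (fun u => Real.log (g u)) ((g t)⁻¹ * deriv g t) t := by
          have := (Real.hasDerivAt_log (hpos t ht).ne').comp t (hdiff t ht).hasDerivAt
          exact this
        exact (h1.const_mul g₀).sub h2
      refine monotoneOn_of_deriv_nonneg (convex_Icc b (2*b)) ?_ ?_ ?_
      · intro t ht
        exact (hder t (lt_of_lt_of_le hb ht.1)).continuousAt.continuousWithinAt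
      · intro t ht
        rw [interior_Icc] at ht
        exact (hder t (lt_trans hb ht.1)).differentiableAt.differentiableWithinAt
      · intro t ht
        rw [interior_Icc] at ht
        have htpos : 0 < t := lt_trans hb ht.1
        rw [(hder t htpos).deriv]
        have h1 := hderiv_le t htpos
        have hg := hpos t htpos
        rw [sub_nonneg]
        have heq : (g t)⁻¹ * (g₀ * g t / t) = g₀ * t⁻¹ := by
          field_simp
        rw [← heq]
        apply mul_le_mul_of_nonneg_left _ (inv_nonneg.mpr hg.le)
        rw [le_div_iff₀ htpos]
        nlinarith
    have hle : H b ≤ H (2 * b) :=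
      hHmono ⟨le_rfl, by linarith⟩ ⟨by linarith, le_rfl⟩ (by linarith)
    simp only [hH] at hle
    have h2b : Real.log (2 * b) = Real.log 2 + Real.log b :=
      Real.log_mul (by norm_num) hb.ne'
    have hlog : Real.log (g (2 * b)) ≤ g₀ * Real.log 2 + Real.log (g b) := by
      rw [h2b] at hle; linarith
    have hgexp : g (2 * b) = Real.exp (Real.log (g (2 * b))) :=
      (Real.exp_log (hpos _ (by linarith))).symm
    calc g (2 * b) = Real.exp (Real.log (g (2 * b))) := hgexp
      _ ≤ Real.exp (g₀ * Real.log 2 + Real.log (g b)) := Real.exp_le_exp.mpr hlog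
      _ = (2:ℝ) ^ g₀ * g b := by
          rw [Real.exp_add, Real.exp_log (hpos b hb),
            Real.rpow_def_of_pos (by norm_num : (0:ℝ) < 2)]
          ring_nf
  -- nonnegativity of G
  have hGnn : ∀ t : ℝ, 0 ≤ t → 0 ≤ ∫ s in (0:ℝ)..t, g s := by
    intro t ht
    apply intervalIntegral.integral_nonneg ht
    intro s hs
    exact hgnn s hs.1
  -- the factor is at least 1
  have hK : (1:ℝ) ≤ (2:ℝ) ^ g₀ * (1 + g₀) := by
    have h1 : (1:ℝ) ≤ (2:ℝ) ^ g₀ := Real.one_le_rpow (by norm_num) hg₀.le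
    nlinarith
  -- main inequality, assuming a ≤ b
  have key : ∀ a b : ℝ, 0 ≤ a → 0 ≤ b → a ≤ b →
      (∫ s in (0:ℝ)..(a + b), g s) ≤
        (2:ℝ) ^ g₀ * (1 + g₀) * ((∫ s in (0:ℝ)..a, g s) + ∫ s in (0:ℝ)..b, g s) := by
    intro a b ha hb hab
    rcases hb.eq_or_lt with h | hbpos
    · have ha0 : a = 0 := le_antisymm (h ▸ hab) ha
      simp [ha0, ← h]
    have hsplit : (∫ s in (0:ℝ)..(a + b), g s)
        = (∫ s in (0:ℝ)..a, g s) + ∫ s in a..(a + b), g s :=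
      (intervalIntegral.integral_add_adjacent_intervals (hint 0 a le_rfl ha)
        (hint a (a + b) ha (by linarith))).symm
    have htail : (∫ s in a..(a + b), g s) ≤ b * g (a + b) := by
      have hmono' : ∀ s ∈ Set.Icc a (a + b), g s ≤ g (a + b) := by
        intro s hs
        exact hmono (Set.mem_Ici.mpr (le_trans ha hs.1))
          (Set.mem_Ici.mpr (by linarith)) hs.2
      calc (∫ s in a..(a + b), g s) ≤ ∫ _ in a..(a + b), g (a + b) := by
            apply intervalIntegral.integral_mono_on (by linarith)
              (hint a (a + b) ha (by linarith)) intervalIntegrable_const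
            intro s hs
            exact hmono' s hs
        _ = b * g (a + b) := by simp
    have hgab : g (a + b) ≤ (2:ℝ) ^ g₀ * g b := by
      calc g (a + b) ≤ g (2 * b) := hmono (Set.mem_Ici.mpr (by linarith))
            (Set.mem_Ici.mpr (by linarith)) (by linarith)
        _ ≤ (2:ℝ) ^ g₀ * g b := hdouble b hbpos
    have h2 : b * g (a + b) ≤ (2:ℝ) ^ g₀ * (b * g b) := by
      have := mul_le_mul_of_nonneg_left hgab hb
      nlinarith
    have h3 : (2:ℝ) ^ g₀ * (b * g b) ≤ (2:ℝ) ^ g₀ * ((1 + g₀) * ∫ s in (0:ℝ)..b, g s) := by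
      apply mul_le_mul_of_nonneg_left (hbgb b hb)
      positivity
    have hGa := hGnn a ha
    have hGb := hGnn b hb
    have h4 : (∫ s in (0:ℝ)..a, g s) ≤ (2:ℝ) ^ g₀ * (1 + g₀) * ∫ s in (0:ℝ)..a, g s := by
      nlinarith
    rw [hsplit]
    nlinarith [htail, h2, h3, h4]
  intro a b ha hb
  rcases le_total a b with h | h
  · exact key a b ha hb h
  · have := key b a hb ha h
    rw [add_comm b a] at this
    linarith
end

section
/- If F satisfies 1+θ₀ ≤ t·F'(t)/F(t) ≤ 1+f₀ for all t > 0 with f := F', then ((1+θ₀)/(1+f₀))·min{s^{θ₀}, s^{f₀}}·f(t) ≤ f(s·t) ≤ ((1+f₀)/(1+θ₀))·max{s^{θ₀}, s^{f₀}}·f(t) for all s, t > 0. -/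
open Set Real

theorem stmt_7 (F f : ℝ → ℝ) (θ₀ f₀ : ℝ)
    (hθ : 0 < 1 + θ₀) (hθf : 1 + θ₀ ≤ 1 + f₀)
    (hcont : ContinuousOn F (Set.Ici 0))
    (hC1 : ContDiffOn ℝ 1 F (Set.Ioi 0))
    (hF0 : F 0 = 0)
    (hpos : ∀ t : ℝ, 0 < t → 0 < F t)
    (hf : ∀ t : ℝ, 0 < t → f t = deriv F t)
    (hlieb : ∀ t : ℝ, 0 < t →
      1 + θ₀ ≤ t * f t / F t ∧ t * f t / F t ≤ 1 + f₀) :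
    ∀ s t : ℝ, 0 < s → 0 < t →
      (1 + θ₀) / (1 + f₀) * min (s ^ θ₀) (s ^ f₀) * f t ≤ f (s * t) ∧
      f (s * t) ≤ (1 + f₀) / (1 + θ₀) * max (s ^ θ₀) (s ^ f₀) * f t := by
  have hf0 : (0:ℝ) < 1 + f₀ := lt_of_lt_of_le hθ hθf
  have hFd : ∀ u : ℝ, 0 < u → DifferentiableAt ℝ F u := by
    intro u hu
    exact ((hC1.differentiableOn one_ne_zero) u hu).differentiableAt (Ioi_mem_nhds hu)
  have hlow : ∀ u : ℝ, 0 < u → (1 + θ₀) * F u ≤ u * f u := by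
    intro u hu
    have h1 := (hlieb u hu).1
    exact (le_div_iff₀ (hpos u hu)).mp h1
  have hhigh : ∀ u : ℝ, 0 < u → u * f u ≤ (1 + f₀) * F u := by
    intro u hu
    have h1 := (hlieb u hu).2
    exact (div_le_iff₀ (hpos u hu)).mp h1
  have hlow' : ∀ u : ℝ, 0 < u → (1 + θ₀) * F u ≤ u * deriv F u := by
    intro u hu; have := hlow u hu; rwa [hf u hu] at this
  have hhigh' : ∀ u : ℝ, 0 < u → u * deriv F u ≤ (1 + f₀) * F u := by
    intro u hu; have := hhigh u hu; rwa [hf u hu] at this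
  -- derivative of u ↦ F u * u ^ (-c)
  have hGd : ∀ (c : ℝ) (u : ℝ), 0 < u →
      HasDerivAt (fun u : ℝ => F u * u ^ (-c))
        (deriv F u * u ^ (-c) + F u * (-c * u ^ (-c - 1))) u := by
    intro c u hu
    exact ((hFd u hu).hasDerivAt).mul (Real.hasDerivAt_rpow_const (Or.inl (ne_of_gt hu)))
  have hGcont : ∀ c : ℝ, ContinuousOn (fun u : ℝ => F u * u ^ (-c)) (Ioi 0) := by
    intro c
    exact (hcont.mono Ioi_subset_Ici_self).mul
      (fun x hx => (Real.continuousAt_rpow_const x (-c) (Or.inl (ne_of_gt hx))).continuousWithinAt)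
  have hsplit : ∀ (c : ℝ) (u : ℝ), 0 < u → u ^ (-c) = u * u ^ (-c - 1) := by
    intro c u hu
    have : u * u ^ (-c - 1) = u ^ (1 + (-c - 1)) := by
      rw [Real.rpow_add hu, Real.rpow_one]
    rw [this]
    congr 1
    ring
  have hmono : MonotoneOn (fun u : ℝ => F u * u ^ (-(1 + θ₀))) (Ioi 0) := by
    apply monotoneOn_of_deriv_nonneg (convex_Ioi 0) (hGcont (1 + θ₀))
    · rw [interior_Ioi]
      exact fun u hu => (hGd (1 + θ₀) u hu).differentiableAt.differentiableWithinAt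
    · rw [interior_Ioi]
      intro u hu
      rw [(hGd (1 + θ₀) u hu).deriv, hsplit (1 + θ₀) u hu]
      have h1 := hlow' u hu
      have h2 : (0:ℝ) ≤ u ^ (-(1 + θ₀) - 1) := Real.rpow_nonneg (le_of_lt hu) _
      nlinarith [mul_le_mul_of_nonneg_right h1 h2]
  have hanti : AntitoneOn (fun u : ℝ => F u * u ^ (-(1 + f₀))) (Ioi 0) := by
    apply antitoneOn_of_deriv_nonpos (convex_Ioi 0) (hGcont (1 + f₀))
    · rw [interior_Ioi]
      exact fun u hu => (hGd (1 + f₀) u hu).differentiableAt.differentiableWithinAt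
    · rw [interior_Ioi]
      intro u hu
      rw [(hGd (1 + f₀) u hu).deriv, hsplit (1 + f₀) u hu]
      have h1 := hhigh' u hu
      have h2 : (0:ℝ) ≤ u ^ (-(1 + f₀) - 1) := Real.rpow_nonneg (le_of_lt hu) _
      nlinarith [mul_le_mul_of_nonneg_right h1 h2]
  -- converting G inequalities into F inequalities
  have hcomp : ∀ (c s t : ℝ), 0 < s → 0 < t →
      F t * t ^ (-c) ≤ F (s * t) * (s * t) ^ (-c) → s ^ c * F t ≤ F (s * t) := by
    intro c s t hs ht h
    have hst : (0:ℝ) < s * t := mul_pos hs ht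
    have hA : (0:ℝ) < t ^ c := Real.rpow_pos_of_pos ht c
    have hB : (0:ℝ) < s ^ c := Real.rpow_pos_of_pos hs c
    rw [Real.rpow_neg hst.le, Real.rpow_neg ht.le, Real.mul_rpow hs.le ht.le,
      ← div_eq_mul_inv, ← div_eq_mul_inv, div_le_div_iff₀ hA (mul_pos hB hA)] at h
    refine le_of_mul_le_mul_right ?_ hA
    calc s ^ c * F t * t ^ c = F t * (s ^ c * t ^ c) := by ring
      _ ≤ F (s * t) * t ^ c := h
  have hcomp' : ∀ (c s t : ℝ), 0 < s → 0 < t →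
      F (s * t) * (s * t) ^ (-c) ≤ F t * t ^ (-c) → F (s * t) ≤ s ^ c * F t := by
    intro c s t hs ht h
    have hst : (0:ℝ) < s * t := mul_pos hs ht
    have hA : (0:ℝ) < t ^ c := Real.rpow_pos_of_pos ht c
    have hB : (0:ℝ) < s ^ c := Real.rpow_pos_of_pos hs c
    rw [Real.rpow_neg hst.le, Real.rpow_neg ht.le, Real.mul_rpow hs.le ht.le,
      ← div_eq_mul_inv, ← div_eq_mul_inv, div_le_div_iff₀ (mul_pos hB hA) hA] at h
    refine le_of_mul_le_mul_right ?_ hA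
    calc F (s * t) * t ^ c ≤ F t * (s ^ c * t ^ c) := h
      _ = s ^ c * F t * t ^ c := by ring
  intro s t hs ht
  have hst : (0:ℝ) < s * t := mul_pos hs ht
  have hsθ : (0:ℝ) < s ^ θ₀ := Real.rpow_pos_of_pos hs _
  have hsf : (0:ℝ) < s ^ f₀ := Real.rpow_pos_of_pos hs _
  have e1 : s ^ (1 + θ₀) = s * s ^ θ₀ := by rw [Real.rpow_add hs, Real.rpow_one]
  have e2 : s ^ (1 + f₀) = s * s ^ f₀ := by rw [Real.rpow_add hs, Real.rpow_one]
  -- the key F bounds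
  have hθf' : θ₀ ≤ f₀ := by linarith
  have hm : s * min (s ^ θ₀) (s ^ f₀) * F t ≤ F (s * t) ∧
      F (s * t) ≤ s * max (s ^ θ₀) (s ^ f₀) * F t := by
    rcases le_total 1 s with hs1 | hs1
    · have hle : t ≤ s * t := le_mul_of_one_le_left ht.le hs1
      have hmin : min (s ^ θ₀) (s ^ f₀) = s ^ θ₀ :=
        min_eq_left (Real.rpow_le_rpow_of_exponent_le hs1 hθf')
      have hmax : max (s ^ θ₀) (s ^ f₀) = s ^ f₀ :=
        max_eq_right (Real.rpow_le_rpow_of_exponent_le hs1 hθf')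
      constructor
      · have := hcomp (1 + θ₀) s t hs ht (hmono ht hst hle)
        rw [hmin]; rw [e1] at this; linarith
      · have := hcomp' (1 + f₀) s t hs ht (hanti ht hst hle)
        rw [hmax]; rw [e2] at this; linarith
    · have hle : s * t ≤ t := mul_le_of_le_one_left ht.le hs1
      have hmin : min (s ^ θ₀) (s ^ f₀) = s ^ f₀ :=
        min_eq_right (Real.rpow_le_rpow_of_exponent_ge hs hs1 hθf')
      have hmax : max (s ^ θ₀) (s ^ f₀) = s ^ θ₀ :=
        max_eq_left (Real.rpow_le_rpow_of_exponent_ge hs hs1 hθf')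
      constructor
      · have := hcomp (1 + f₀) s t hs ht (hanti hst ht hle)
        rw [hmin]; rw [e2] at this; linarith
      · have := hcomp' (1 + θ₀) s t hs ht (hmono hst ht hle)
        rw [hmax]; rw [e1] at this; linarith
  obtain ⟨hmlow, hmhigh⟩ := hm
  set m := min (s ^ θ₀) (s ^ f₀) with hmdef
  set M := max (s ^ θ₀) (s ^ f₀) with hMdef
  have hmpos : (0:ℝ) < m := lt_min hsθ hsf
  have hMpos : (0:ℝ) < M := lt_of_lt_of_le hsθ (le_max_left _ _)
  constructor
  · rw [div_mul_eq_mul_div, div_mul_eq_mul_div, div_le_iff₀ hf0]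
    refine le_of_mul_le_mul_right ?_ hst
    calc (1 + θ₀) * m * f t * (s * t) = (1 + θ₀) * m * s * (t * f t) := by ring
      _ ≤ (1 + θ₀) * m * s * ((1 + f₀) * F t) := by
          apply mul_le_mul_of_nonneg_left (hhigh t ht) (by positivity)
      _ = (1 + f₀) * ((1 + θ₀) * (s * m * F t)) := by ring
      _ ≤ (1 + f₀) * ((1 + θ₀) * F (s * t)) :=
          mul_le_mul_of_nonneg_left (mul_le_mul_of_nonneg_left hmlow hθ.le) hf0.le
      _ ≤ (1 + f₀) * ((s * t) * f (s * t)) :=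
          mul_le_mul_of_nonneg_left (hlow (s * t) hst) hf0.le
      _ = f (s * t) * (1 + f₀) * (s * t) := by ring
  · rw [div_mul_eq_mul_div, div_mul_eq_mul_div, le_div_iff₀ hθ]
    refine le_of_mul_le_mul_right ?_ hst
    calc f (s * t) * (1 + θ₀) * (s * t) = (1 + θ₀) * ((s * t) * f (s * t)) := by ring
      _ ≤ (1 + θ₀) * ((1 + f₀) * F (s * t)) :=
          mul_le_mul_of_nonneg_left (hhigh (s * t) hst) hθ.le
      _ ≤ (1 + θ₀) * ((1 + f₀) * (s * M * F t)) :=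
          mul_le_mul_of_nonneg_left (mul_le_mul_of_nonneg_left hmhigh hf0.le) hθ.le
      _ = (1 + f₀) * M * s * ((1 + θ₀) * F t) := by ring
      _ ≤ (1 + f₀) * M * s * (t * f t) := by
          apply mul_le_mul_of_nonneg_left (hlow t ht) (by positivity)
      _ = (1 + f₀) * M * f t * (s * t) := by ring
end

section
/- Suppose g satisfies the Lieberman condition with lower exponent δ₀ and F satisfies 1+θ₀ ≤ t·F'(t)/F(t) ≤ 1+f₀ with f₀ < δ₀. Then lim_{t→∞} f(t)/g(t) = 0 and lim_{t→∞} F(t)/G(t) = 0, where f = F' and G(t) = ∫₀ᵗ g. -/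
open Filter Real

lemma aux_mono (φ : ℝ → ℝ) (c : ℝ)
    (hcont : ContinuousOn φ (Set.Ici 1))
    (hd : ∀ t ∈ Set.Ioi (1:ℝ), DifferentiableAt ℝ φ t)
    (hge : ∀ t ∈ Set.Ioi (1:ℝ), c * φ t ≤ t * deriv φ t) :
    ∀ t, 1 ≤ t → φ 1 * t ^ c ≤ φ t := by
  intro t ht
  have ht0 : (0:ℝ) < t := lt_of_lt_of_le zero_lt_one ht
  set h : ℝ → ℝ := fun x => φ x * x ^ (-c) with hh
  have hmono : MonotoneOn h (Set.Ici 1) := by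
    apply monotoneOn_of_deriv_nonneg (convex_Ici 1)
    · exact hcont.mul (fun x hx =>
        (Real.continuousAt_rpow_const x (-c)
          (Or.inl (ne_of_gt (lt_of_lt_of_le zero_lt_one hx)))).continuousWithinAt)
    · intro x hx
      rw [interior_Ici] at hx
      have hx0 : (0:ℝ) < x := lt_trans zero_lt_one hx
      exact ((hd x hx).mul
        ((Real.hasDerivAt_rpow_const (p := -c) (Or.inl hx0.ne')).differentiableAt)).differentiableWithinAt
    · intro x hx
      rw [interior_Ici] at hx
      have hx0 : (0:ℝ) < x := lt_trans zero_lt_one hx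
      have hφd := (hd x hx).hasDerivAt
      have hr : HasDerivAt (fun y : ℝ => y ^ (-c)) (-c * x ^ (-c - 1)) x :=
        Real.hasDerivAt_rpow_const (Or.inl hx0.ne')
      have hder : HasDerivAt h (deriv φ x * x ^ (-c) + φ x * (-c * x ^ (-c - 1))) x :=
        hφd.mul hr
      rw [hder.deriv]
      have key := hge x hx
      have hxpow : x ^ (-c) = x * x ^ (-c - 1) := by
        have h2 := Real.rpow_add hx0 1 (-c - 1)
        rw [show (1:ℝ) + (-c - 1) = -c by ring, Real.rpow_one] at h2
        exact h2
      have h1 : (0:ℝ) ≤ x ^ (-c - 1) := (Real.rpow_pos_of_pos hx0 _).le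
      have h2 : 0 ≤ (x * deriv φ x - c * φ x) * x ^ (-c - 1) :=
        mul_nonneg (by linarith) h1
      rw [hxpow]
      nlinarith [h2]
  have hle : h 1 ≤ h t := hmono (show (1:ℝ) ∈ Set.Ici 1 from le_refl (1:ℝ)) ht ht
  have h1eq : h 1 = φ 1 := by simp [hh]
  rw [h1eq] at hle
  have := mul_le_mul_of_nonneg_right hle (Real.rpow_pos_of_pos ht0 c).le
  calc φ 1 * t ^ c ≤ φ t * t ^ (-c) * t ^ c := this
    _ = φ t := by
        rw [mul_assoc, ← Real.rpow_add ht0]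
        simp


theorem stmt_8 (g F f G : ℝ → ℝ) (δ₀ g₀ θ₀ f₀ : ℝ)
    (hδ : 0 < δ₀) (hδg : δ₀ ≤ g₀)
    (hθ : 0 < 1 + θ₀) (hθf : 1 + θ₀ ≤ 1 + f₀)
    (hfδ : f₀ < δ₀)
    (hcontg : ContinuousOn g (Set.Ici 0))
    (hC1g : ContDiffOn ℝ 1 g (Set.Ioi 0))
    (hg0 : g 0 = 0)
    (hposg : ∀ t : ℝ, 0 < t → 0 < g t)
    (hliebg : ∀ t : ℝ, 0 < t → δ₀ ≤ t * deriv g t / g t ∧ t * deriv g t / g t ≤ g₀)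
    (hcontF : ContinuousOn F (Set.Ici 0))
    (hC1F : ContDiffOn ℝ 1 F (Set.Ioi 0))
    (hF0 : F 0 = 0)
    (hposF : ∀ t : ℝ, 0 < t → 0 < F t)
    (hf : ∀ t : ℝ, 0 < t → f t = deriv F t)
    (hliebF : ∀ t : ℝ, 0 < t →
      1 + θ₀ ≤ t * f t / F t ∧ t * f t / F t ≤ 1 + f₀)
    (hG : ∀ t : ℝ, G t = ∫ s in (0:ℝ)..t, g s) :
    Filter.Tendsto (fun t => f t / g t) Filter.atTop (nhds 0) ∧
    Filter.Tendsto (fun t => F t / G t) Filter.atTop (nhds 0) := by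
  have hsub : Set.Ici (1:ℝ) ⊆ Set.Ici 0 := fun x hx => Set.mem_Ici.mpr (le_trans zero_le_one (Set.mem_Ici.mp hx))
  have hg1 : 0 < g 1 := hposg 1 one_pos
  have hF1 : 0 < F 1 := hposF 1 one_pos
  have hf0pos : 0 < 1 + f₀ := lt_of_lt_of_le hθ hθf
  -- lower bound on g
  have hA : ∀ t, 1 ≤ t → g 1 * t ^ δ₀ ≤ g t := by
    apply aux_mono g δ₀ (hcontg.mono hsub)
    · intro t ht
      have ht0 : (0:ℝ) < t := lt_trans zero_lt_one ht
      exact (hC1g.differentiableOn one_ne_zero).differentiableAt (isOpen_Ioi.mem_nhds ht0)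
    · intro t ht
      have ht0 : (0:ℝ) < t := lt_trans zero_lt_one ht
      have := (hliebg t ht0).1
      rw [le_div_iff₀ (hposg t ht0)] at this
      linarith
  -- upper bound on F
  have hB : ∀ t, 1 ≤ t → F t ≤ F 1 * t ^ (1 + f₀) := by
    have hFd : ∀ t ∈ Set.Ioi (0:ℝ), DifferentiableAt ℝ F t := fun t ht =>
      (hC1F.differentiableOn one_ne_zero).differentiableAt (isOpen_Ioi.mem_nhds ht)
    have key := aux_mono (fun x => -F x) (1 + f₀)
      ((hcontF.mono hsub).neg)
      (fun t ht => ((hFd t (Set.mem_Ioi.mpr (lt_trans zero_lt_one (Set.mem_Ioi.mp ht)))).neg))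
      (by
        intro t ht
        have ht0 : (0:ℝ) < t := lt_trans zero_lt_one ht
        have h2 := (hliebF t ht0).2
        rw [hf t ht0, div_le_iff₀ (hposF t ht0)] at h2
        have : deriv (fun x => -F x) t = -deriv F t := by
          simp [deriv.neg]
        rw [this]
        show (1 + f₀) * (-F t) ≤ t * -deriv F t
        linarith)
    intro t ht
    have := key t ht
    simp only [neg_mul] at this
    linarith
  -- positivity and bound for f
  have hfpos : ∀ t : ℝ, 0 < t → 0 < f t := by
    intro t ht
    have h1 := (hliebF t ht).1
    have h2 : 0 < t * f t / F t := lt_of_lt_of_le hθ h1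
    have hF := hposF t ht
    have h3 : 0 < t * f t := by
      rcases div_pos_iff.mp h2 with ⟨h, _⟩ | ⟨_, h⟩
      · exact h
      · linarith
    nlinarith
  have hfle : ∀ t : ℝ, 0 < t → t * f t ≤ (1 + f₀) * F t := by
    intro t ht
    have h2 := (hliebF t ht).2
    rw [div_le_iff₀ (hposF t ht)] at h2
    linarith
  -- bound f t by power for t ≥ 1
  have hfbound : ∀ t, 1 ≤ t → f t ≤ ((1 + f₀) * F 1) * t ^ f₀ := by
    intro t ht
    have ht0 : (0:ℝ) < t := lt_of_lt_of_le zero_lt_one ht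
    have h1 := hfle t ht0
    have h2 := hB t ht
    have h3 : t ^ (1 + f₀) = t * t ^ f₀ := by
      rw [Real.rpow_add ht0, Real.rpow_one]
    rw [h3] at h2
    nlinarith
  -- Part 1: f/g → 0
  set C₁ : ℝ := (1 + f₀) * F 1 / g 1 with hC₁
  have part1 : Filter.Tendsto (fun t => f t / g t) Filter.atTop (nhds 0) := by
    have hlim : Filter.Tendsto (fun t : ℝ => C₁ * t ^ (f₀ - δ₀)) Filter.atTop (nhds 0) := by
      have h0 : Filter.Tendsto (fun t : ℝ => t ^ (-(δ₀ - f₀))) Filter.atTop (nhds 0) :=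
        tendsto_rpow_neg_atTop (by linarith)
      have : (fun t : ℝ => C₁ * t ^ (f₀ - δ₀)) = fun t : ℝ => C₁ * t ^ (-(δ₀ - f₀)) := by
        ext t; ring_nf
      rw [this]
      simpa using h0.const_mul C₁
    apply tendsto_of_tendsto_of_tendsto_of_le_of_le' tendsto_const_nhds hlim
    · filter_upwards [eventually_ge_atTop (1:ℝ)] with t ht
      have ht0 : (0:ℝ) < t := lt_of_lt_of_le zero_lt_one ht
      exact (div_pos (hfpos t ht0) (hposg t ht0)).le
    · filter_upwards [eventually_ge_atTop (1:ℝ)] with t ht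
      have ht0 : (0:ℝ) < t := lt_of_lt_of_le zero_lt_one ht
      have hgt := hposg t ht0
      have hnum := hfbound t ht
      have hden := hA t ht
      have hdpos : 0 < g 1 * t ^ δ₀ := mul_pos hg1 (Real.rpow_pos_of_pos ht0 _)
      calc f t / g t ≤ ((1 + f₀) * F 1 * t ^ f₀) / (g 1 * t ^ δ₀) := by
            apply div_le_div₀ (by positivity) hnum hdpos hden
        _ = C₁ * t ^ (f₀ - δ₀) := by
            rw [hC₁, Real.rpow_sub ht0]
            field_simp
  -- Part 2: F/G → 0
  have hintg : ∀ a b : ℝ, 0 ≤ a → IntervalIntegrable g MeasureTheory.volume a b → True := fun _ _ _ _ => trivial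
  have hGlow : ∀ t : ℝ, 2 ≤ t → g 1 * t ^ (δ₀ + 1) / (2 * (δ₀ + 1)) ≤ G t := by
    intro t ht
    have ht1 : (1:ℝ) ≤ t := by linarith
    have ht0 : (0:ℝ) < t := by linarith
    have hint1 : IntervalIntegrable g MeasureTheory.volume 0 1 := by
      apply ContinuousOn.intervalIntegrable
      rw [Set.uIcc_of_le zero_le_one]
      exact hcontg.mono (Set.Icc_subset_Ici_self)
    have hint2 : IntervalIntegrable g MeasureTheory.volume 1 t := by
      apply ContinuousOn.intervalIntegrable
      rw [Set.uIcc_of_le ht1]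
      exact hcontg.mono (fun x hx => le_trans zero_le_one hx.1)
    have hsplit : G t = (∫ s in (0:ℝ)..1, g s) + ∫ s in (1:ℝ)..t, g s := by
      rw [hG t, ← intervalIntegral.integral_add_adjacent_intervals hint1 hint2]
    have h1 : 0 ≤ ∫ s in (0:ℝ)..1, g s := by
      apply intervalIntegral.integral_nonneg zero_le_one
      intro x hx
      rcases eq_or_lt_of_le hx.1 with h | h
      · simp [← h, hg0]
      · exact (hposg x h).le
    have hintr : IntervalIntegrable (fun s : ℝ => g 1 * s ^ δ₀) MeasureTheory.volume 1 t := by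
      apply IntervalIntegrable.const_mul
      apply intervalIntegral.intervalIntegrable_rpow'
      linarith
    have h2 : g 1 * ((t ^ (δ₀ + 1) - 1) / (δ₀ + 1)) ≤ ∫ s in (1:ℝ)..t, g s := by
      have hmono2 : (∫ s in (1:ℝ)..t, g 1 * s ^ δ₀) ≤ ∫ s in (1:ℝ)..t, g s := by
        apply intervalIntegral.integral_mono_on ht1 hintr hint2
        intro x hx
        exact hA x hx.1
      have heval : (∫ s in (1:ℝ)..t, g 1 * s ^ δ₀) = g 1 * ((t ^ (δ₀ + 1) - 1) / (δ₀ + 1)) := by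
        rw [intervalIntegral.integral_const_mul, integral_rpow (Or.inl (by linarith))]
        rw [Real.one_rpow]
      rw [← heval]
      exact hmono2
    have h3 : t ^ (δ₀ + 1) / 2 ≤ t ^ (δ₀ + 1) - 1 := by
      have : (2:ℝ) ≤ t ^ (δ₀ + 1) := by
        calc (2:ℝ) ≤ t := ht
          _ = t ^ (1:ℝ) := (Real.rpow_one t).symm
          _ ≤ t ^ (δ₀ + 1) := Real.rpow_le_rpow_of_exponent_le ht1 (by linarith)
      linarith
    have hδ1 : (0:ℝ) < δ₀ + 1 := by linarith
    calc g 1 * t ^ (δ₀ + 1) / (2 * (δ₀ + 1)) = g 1 * ((t ^ (δ₀ + 1) / 2) / (δ₀ + 1)) := by rw [div_div, mul_div_assoc]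
      _ ≤ g 1 * ((t ^ (δ₀ + 1) - 1) / (δ₀ + 1)) := by
          apply mul_le_mul_of_nonneg_left _ hg1.le
          apply div_le_div_of_nonneg_right h3 hδ1.le
      _ ≤ ∫ s in (1:ℝ)..t, g s := h2
      _ ≤ G t := by rw [hsplit]; linarith
  set C₂ : ℝ := 2 * (δ₀ + 1) * F 1 / g 1 with hC₂
  have part2 : Filter.Tendsto (fun t => F t / G t) Filter.atTop (nhds 0) := by
    have hlim : Filter.Tendsto (fun t : ℝ => C₂ * t ^ (f₀ - δ₀)) Filter.atTop (nhds 0) := by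
      have h0 : Filter.Tendsto (fun t : ℝ => t ^ (-(δ₀ - f₀))) Filter.atTop (nhds 0) :=
        tendsto_rpow_neg_atTop (by linarith)
      have : (fun t : ℝ => C₂ * t ^ (f₀ - δ₀)) = fun t : ℝ => C₂ * t ^ (-(δ₀ - f₀)) := by
        ext t; ring_nf
      rw [this]
      simpa using h0.const_mul C₂
    apply tendsto_of_tendsto_of_tendsto_of_le_of_le' tendsto_const_nhds hlim
    · filter_upwards [eventually_ge_atTop (2:ℝ)] with t ht
      have ht0 : (0:ℝ) < t := by linarith
      have hGpos : 0 < G t := by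
        have := hGlow t ht
        have : 0 < g 1 * t ^ (δ₀ + 1) / (2 * (δ₀ + 1)) := by positivity
        linarith [hGlow t ht]
      exact (div_pos (hposF t ht0) hGpos).le
    · filter_upwards [eventually_ge_atTop (2:ℝ)] with t ht
      have ht1 : (1:ℝ) ≤ t := by linarith
      have ht0 : (0:ℝ) < t := by linarith
      have hnum := hB t ht1
      have hden := hGlow t ht
      have hdpos : 0 < g 1 * t ^ (δ₀ + 1) / (2 * (δ₀ + 1)) := by positivity
      calc F t / G t ≤ (F 1 * t ^ (1 + f₀)) / (g 1 * t ^ (δ₀ + 1) / (2 * (δ₀ + 1))) := by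
            apply div_le_div₀ (by positivity) hnum hdpos hden
        _ = C₂ * t ^ (f₀ - δ₀) := by
            have hexp : f₀ - δ₀ = (1 + f₀) - (δ₀ + 1) := by ring
            rw [hC₂, hexp, Real.rpow_sub ht0]
            have h1 : t ^ (δ₀ + 1) ≠ 0 := (Real.rpow_pos_of_pos ht0 _).ne'
            field_simp
  exact ⟨part1, part2⟩
end

section
/- Under the Lieberman condition on g, with G(t) = ∫₀ᵗ g and G̃(t) = ∫₀ᵗ g⁻¹, one has G̃(g(t)) ≤ g₀·G(t) for all t ≥ 0. -/
open Set intervalIntegral MeasureTheory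

theorem stmt_14 (g ginv G Gt : ℝ → ℝ) (δ₀ g₀ : ℝ)
    (hδ : 0 < δ₀) (hδg : δ₀ ≤ g₀)
    (hcont : ContinuousOn g (Set.Ici 0))
    (hC1 : ContDiffOn ℝ 1 g (Set.Ioi 0))
    (hg0 : g 0 = 0)
    (hpos : ∀ t : ℝ, 0 < t → 0 < g t)
    (hstrict : StrictMonoOn g (Set.Ici 0))
    (hsurj : ∀ y : ℝ, 0 ≤ y → ∃ x : ℝ, 0 ≤ x ∧ g x = y)
    (hlieb : ∀ t : ℝ, 0 < t → δ₀ ≤ t * deriv g t / g t ∧ t * deriv g t / g t ≤ g₀)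
    (hinv₁ : ∀ t : ℝ, 0 ≤ t → ginv (g t) = t)
    (hinv₂ : ∀ t : ℝ, 0 ≤ t → g (ginv t) = t)
    (hG : ∀ t : ℝ, G t = ∫ s in (0:ℝ)..t, g s)
    (hGt : ∀ t : ℝ, Gt t = ∫ s in (0:ℝ)..t, ginv s) :
    ∀ t : ℝ, 0 ≤ t → Gt (g t) ≤ g₀ * G t := by
  -- basic facts
  have hg00 : 0 < g₀ := lt_of_lt_of_le hδ hδg
  have hginv0 : ginv 0 = 0 := by
    have := hinv₁ 0 le_rfl
    rwa [hg0] at this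
  have hginv_eq : ∀ y : ℝ, 0 ≤ y → ∃ x : ℝ, 0 ≤ x ∧ g x = y ∧ ginv y = x := by
    intro y hy
    obtain ⟨x, hx, hgx⟩ := hsurj y hy
    exact ⟨x, hx, hgx, by rw [← hgx, hinv₁ x hx]⟩
  have hginv_nonneg : ∀ y : ℝ, 0 ≤ y → 0 ≤ ginv y := by
    intro y hy
    obtain ⟨x, hx, -, hgi⟩ := hginv_eq y hy
    rw [hgi]; exact hx
  have hginv_pos : ∀ y : ℝ, 0 < y → 0 < ginv y := by
    intro y hy
    obtain ⟨x, hx, hgx, hgi⟩ := hginv_eq y hy.le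
    rw [hgi]
    rcases hx.lt_or_eq with h | h
    · exact h
    · exfalso; rw [← h, hg0] at hgx; exact hy.ne hgx
  have hginv_mono : MonotoneOn ginv (Ici 0) := by
    intro y₁ hy₁ y₂ hy₂ h12
    obtain ⟨x₁, hx₁, hgx₁, hgi₁⟩ := hginv_eq y₁ hy₁
    obtain ⟨x₂, hx₂, hgx₂, hgi₂⟩ := hginv_eq y₂ hy₂
    rw [hgi₁, hgi₂]
    by_contra h
    push_neg at h
    have := hstrict hx₂ hx₁ h
    rw [hgx₁, hgx₂] at this
    exact absurd h12 (not_le.2 this)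
  have hg_nonneg : ∀ s : ℝ, 0 ≤ s → 0 ≤ g s := by
    intro s hs
    rcases hs.lt_or_eq with h | h
    · exact (hpos s h).le
    · rw [← h, hg0]
  -- continuity of ginv on (0,∞)
  have hginv_contAt : ∀ y : ℝ, 0 < y → ContinuousAt ginv y := by
    intro y hy
    refine continuousAt_of_monotoneOn_of_image_mem_nhds
      (hginv_mono.mono (Ioi_subset_Ici le_rfl)) (Ioi_mem_nhds hy) ?_
    have hsub : Ioi (0:ℝ) ⊆ ginv '' Ioi 0 := by
      intro z hz
      exact ⟨g z, hpos z hz, hinv₁ z (le_of_lt hz)⟩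
    exact Filter.mem_of_superset (Ioi_mem_nhds (hginv_pos y hy)) hsub
  have hginv_contOn : ContinuousOn ginv (Ioi 0) :=
    fun y hy => (hginv_contAt y hy).continuousWithinAt
  -- main argument
  intro t ht
  rcases ht.lt_or_eq with htpos | h0
  swap
  · rw [← h0, hg0, hGt, hG, intervalIntegral.integral_same, intervalIntegral.integral_same,
      mul_zero]
  have hgt_nonneg : 0 ≤ g t := hg_nonneg t ht
  -- integrability
  have hIntg : ∀ s : ℝ, 0 ≤ s → IntervalIntegrable g volume 0 s := by
    intro s hs
    apply ContinuousOn.intervalIntegrable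
    apply hcont.mono
    rw [uIcc_of_le hs]
    exact Icc_subset_Ici_self
  have hIntginv : ∀ y : ℝ, 0 ≤ y → IntervalIntegrable ginv volume 0 y := by
    intro y hy
    apply MonotoneOn.intervalIntegrable
    apply hginv_mono.mono
    rw [uIcc_of_le hy]
    exact Icc_subset_Ici_self
  -- the function φ
  set φ : ℝ → ℝ := fun s => g₀ * (∫ u in (0:ℝ)..s, g u) - ∫ u in (0:ℝ)..(g s), ginv u with hφ
  have hmapsTo : MapsTo g (Icc 0 t) (Icc 0 (g t)) := by
    intro s hs
    exact ⟨hg_nonneg s hs.1, by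
      rcases hs.2.lt_or_eq with h | h
      · exact (hstrict hs.1 ht h).le
      · rw [h]⟩
  -- continuity of φ on Icc 0 t
  have hφcont : ContinuousOn φ (Icc 0 t) := by
    have h1 : ContinuousOn (fun s => ∫ u in (0:ℝ)..s, g u) (Icc 0 t) := by
      have := continuousOn_primitive_interval' (hIntg t ht) (left_mem_uIcc (a := (0:ℝ)) (b := t))
      rwa [uIcc_of_le ht] at this
    have h2 : ContinuousOn (fun s => ∫ u in (0:ℝ)..(g s), ginv u) (Icc 0 t) := by
      have hGtc : ContinuousOn (fun y => ∫ u in (0:ℝ)..y, ginv u) (Icc 0 (g t)) := by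
        have := continuousOn_primitive_interval' (hIntginv (g t) hgt_nonneg)
          (left_mem_uIcc (a := (0:ℝ)) (b := g t))
        rwa [uIcc_of_le hgt_nonneg] at this
      exact hGtc.comp (hcont.mono Icc_subset_Ici_self) hmapsTo
    exact (continuousOn_const.mul h1).sub h2
  -- derivative of φ on the interior
  have hφderiv : ∀ s ∈ Ioo (0:ℝ) t, HasDerivAt φ (g₀ * g s - s * deriv g s) s := by
    intro s hs
    have hs0 : 0 < s := hs.1
    have hgs_pos : 0 < g s := hpos s hs0
    -- derivative of the first integral
    have hmeas_g : StronglyMeasurableAtFilter g (nhds s) :=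
      ContinuousOn.stronglyMeasurableAtFilter isOpen_Ioi (hcont.mono (Ioi_subset_Ici le_rfl)) s hs0
    have hg_contAt : ContinuousAt g s :=
      (hcont s hs0.le).continuousAt (Ici_mem_nhds hs0)
    have hd1 : HasDerivAt (fun x => ∫ u in (0:ℝ)..x, g u) (g s) s :=
      intervalIntegral.integral_hasDerivAt_right (hIntg s hs0.le) hmeas_g hg_contAt
    -- derivative of g at s
    have hdg : HasDerivAt g (deriv g s) s := by
      have : DifferentiableAt ℝ g s :=
        ((hC1.differentiableOn one_ne_zero) s hs0).differentiableAt (Ioi_mem_nhds hs0)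
      exact this.hasDerivAt
    -- derivative of the primitive of ginv at g s
    have hmeas_ginv : StronglyMeasurableAtFilter ginv (nhds (g s)) :=
      ContinuousOn.stronglyMeasurableAtFilter isOpen_Ioi hginv_contOn (g s) hgs_pos
    have hd2 : HasDerivAt (fun y => ∫ u in (0:ℝ)..y, ginv u) (ginv (g s)) (g s) :=
      intervalIntegral.integral_hasDerivAt_right (hIntginv (g s) hgs_pos.le) hmeas_ginv
        (hginv_contAt (g s) hgs_pos)
    have hd3 : HasDerivAt (fun x => ∫ u in (0:ℝ)..(g x), ginv u)
        (ginv (g s) * deriv g s) s := hd2.comp s hdg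
    rw [hinv₁ s hs0.le] at hd3
    exact ((hd1.const_mul g₀).sub hd3)
  -- φ is monotone on Icc 0 t
  have hmono : MonotoneOn φ (Icc 0 t) := by
    apply monotoneOn_of_deriv_nonneg (convex_Icc 0 t) hφcont
    · intro s hs
      rw [interior_Icc] at hs
      exact ((hφderiv s hs).differentiableAt).differentiableWithinAt
    · intro s hs
      rw [interior_Icc] at hs
      rw [(hφderiv s hs).deriv]
      have hgs_pos : 0 < g s := hpos s hs.1
      have := (hlieb s hs.1).2
      rw [div_le_iff₀ hgs_pos] at this
      linarith [this]
  have key := hmono (left_mem_Icc.2 ht) (right_mem_Icc.2 ht) ht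
  have hφ0 : φ 0 = 0 := by
    simp [hφ, hg0, intervalIntegral.integral_same]
  rw [hφ0] at key
  rw [hGt, hG]
  simpa [hφ, sub_nonneg] using key
end

section
/- The function g(t) = (1+t)·ln(1+t) − t satisfies the Lieberman condition 1 ≤ t·g'(t)/g(t) ≤ 2 for all t > 0. -/
lemma aux_log_lower (t : ℝ) (ht : 0 < t) :
    t / (1 + t) < Real.log (1 + t) := by
  have h1 : (0:ℝ) < 1 + t := by linarith
  have := Real.log_lt_sub_one_of_pos (x := (1 + t)⁻¹) (by positivity)
    (by
      intro h
      have : (1:ℝ) + t = 1 := by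
        field_simp at h; linarith
      linarith)
  rw [Real.log_inv] at this
  have h2 : (1 + t)⁻¹ - 1 = -(t / (1 + t)) := by field_simp; ring
  rw [h2] at this
  linarith

lemma aux_key (t : ℝ) (ht : 0 ≤ t) : 2 * t ≤ (2 + t) * Real.log (1 + t) := by
  set f : ℝ → ℝ := fun t => (2 + t) * Real.log (1 + t) - 2 * t with hf
  have hmono : MonotoneOn f (Set.Ici 0) := by
    apply monotoneOn_of_deriv_nonneg (convex_Ici 0)
    · apply ContinuousOn.sub
      · apply ContinuousOn.mul (by fun_prop)
        apply ContinuousOn.log (by fun_prop)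
        intro x hx
        simp only [Set.mem_Ici] at hx
        nlinarith
      · fun_prop
    · apply DifferentiableOn.sub
      · apply DifferentiableOn.mul (by fun_prop)
        apply DifferentiableOn.log (by fun_prop)
        intro x hx
        rw [interior_Ici] at hx
        simp only [Set.mem_Ioi] at hx
        nlinarith
      · fun_prop
    · intro x hx
      rw [interior_Ici] at hx
      simp only [Set.mem_Ioi] at hx
      have h1 : (0:ℝ) < 1 + x := by linarith
      have hd : HasDerivAt f (Real.log (1 + x) + (2 + x) / (1 + x) - 2) x := by
        have hl : HasDerivAt (fun t : ℝ => Real.log (1 + t)) (1 / (1 + x)) x := by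
          have := (Real.hasDerivAt_log (ne_of_gt h1)).comp x
            ((hasDerivAt_id x).const_add 1)
          simpa [Function.comp_def] using this
        have hp : HasDerivAt (fun t : ℝ => (2 + t) * Real.log (1 + t))
            (1 * Real.log (1 + x) + (2 + x) * (1 / (1 + x))) x :=
          ((hasDerivAt_id x).const_add 2).mul hl
        have := hp.sub ((hasDerivAt_id x).const_mul 2)
        have h5 : HasDerivAt f (1 * Real.log (1 + x) + (2 + x) * (1 / (1 + x)) - 2 * 1) x := by
          simpa [hf, id, Pi.sub_def] using this
        convert h5 using 1
        field_simp
      rw [hd.deriv]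
      have h2 := aux_log_lower x hx
      have h3 : (2 + x) / (1 + x) - 2 = -(x / (1 + x)) := by field_simp; ring
      linarith [h3]
  have := hmono (Set.mem_Ici.mpr le_rfl) (Set.mem_Ici.mpr ht) ht
  simp only [hf, add_zero, Real.log_one, mul_zero, sub_zero] at this
  linarith

theorem stmt_17 (g : ℝ → ℝ)
    (hg : ∀ t : ℝ, g t = (1 + t) * Real.log (1 + t) - t) :
    ∀ t : ℝ, 0 < t →
      1 ≤ t * deriv g t / g t ∧ t * deriv g t / g t ≤ 2 := by
  intro t ht
  have h1 : (0:ℝ) < 1 + t := by linarith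
  have hgeq : g = fun t => (1 + t) * Real.log (1 + t) - t := funext hg
  have hd : deriv g t = Real.log (1 + t) := by
    have hl : HasDerivAt (fun s : ℝ => Real.log (1 + s)) (1 / (1 + t)) t := by
      have := (Real.hasDerivAt_log (ne_of_gt h1)).comp t
        ((hasDerivAt_id t).const_add 1)
      simpa [Function.comp_def] using this
    have hp : HasDerivAt (fun s : ℝ => (1 + s) * Real.log (1 + s))
        (1 * Real.log (1 + t) + (1 + t) * (1 / (1 + t))) t :=
      ((hasDerivAt_id t).const_add 1).mul hl
    have hG : HasDerivAt g (1 * Real.log (1 + t) + (1 + t) * (1 / (1 + t)) - 1) t := by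
      rw [hgeq]; exact hp.sub (hasDerivAt_id t)
    rw [hG.deriv]
    field_simp
    ring
  have hL := aux_log_lower t ht
  have hgpos : 0 < g t := by
    rw [hg t]
    have : t / (1 + t) * (1 + t) = t := by field_simp
    nlinarith
  have hupper : Real.log (1 + t) ≤ t := by
    have := Real.log_le_sub_one_of_pos h1
    linarith
  constructor
  · rw [le_div_iff₀ hgpos, hd, hg t]
    nlinarith
  · rw [div_le_iff₀ hgpos, hd, hg t]
    have := aux_key t ht.le
    nlinarith
end

section
/- For constants a, b > 0, the function g(t) = ln(1+a·t) + b·t satisfies b/(a+b) ≤ t·g'(t)/g(t) ≤ (a+b)/b for all t > 0. -/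
theorem stmt_18 (a b : ℝ) (ha : 0 < a) (hb : 0 < b) (g : ℝ → ℝ)
    (hg : ∀ t : ℝ, g t = Real.log (1 + a * t) + b * t) :
    ∀ t : ℝ, 0 < t →
      b / (a + b) ≤ t * deriv g t / g t ∧ t * deriv g t / g t ≤ (a + b) / b := by
  have hgf : g = fun t => Real.log (1 + a * t) + b * t := funext hg
  intro t ht
  have hD : (0:ℝ) < 1 + a * t := by nlinarith
  have hderiv : HasDerivAt g (a / (1 + a * t) + b) t := by
    rw [hgf]
    have h1 : HasDerivAt (fun t : ℝ => 1 + a * t) a t := by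
      simpa using ((hasDerivAt_id t).const_mul a).const_add 1
    have h2 : HasDerivAt (fun t : ℝ => Real.log (1 + a * t)) (a / (1 + a * t)) t := by
      simpa [div_eq_inv_mul, Function.comp_def] using (Real.hasDerivAt_log hD.ne').comp t h1
    simpa [Pi.add_def] using h2.add ((hasDerivAt_id t).const_mul b)
  rw [hderiv.deriv, hg t]
  set L := Real.log (1 + a * t) with hL
  have hLpos : 0 < L := Real.log_pos (by nlinarith)
  have hGpos : 0 < L + b * t := by nlinarith
  have hLle : L ≤ a * t := by
    have := Real.log_le_sub_one_of_pos hD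
    linarith
  have hLge : 1 - (1 + a * t)⁻¹ ≤ L := Real.one_sub_inv_le_log_of_pos hD
  have hinv : (1 + a * t)⁻¹ = 1 / (1 + a * t) := (one_div _).symm
  have hab : 0 < a + b := by linarith
  constructor
  · rw [div_le_div_iff₀ hab hGpos]
    have h3 : 0 ≤ t * (a / (1 + a * t)) := by positivity
    nlinarith
  · rw [div_le_div_iff₀ hGpos hb]
    have h4 : a / (1 + a * t) ≤ a := by
      rw [div_le_iff₀ hD]; nlinarith
    have h5 : t * (a / (1 + a * t)) ≤ L := by
      rw [hinv] at hLge
      have : t * (a / (1 + a * t)) = 1 - 1 / (1 + a * t) := by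
        field_simp; ring
      rw [this]; exact hLge
    nlinarith
end
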